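/- Let G be a cograph of depth at most d (d ≥ 1) that does not contain the complete bipartite graph K_{t,t} as an induced subgraph, for some positive integer t. Then the subchromatic number of G is at most 1 + (d − 1)(t − 1): there is a coloring of V(G) with at most 1 + (d − 1)(t − 1) colors such that each color class induces a disjoint union of cliques. -/

import Mathlib

/-- `G` restricted to the set `S` admits a cotree of depth at most `d`. -/
def CotreeDepth {V : Type*} (G : SimpleGraph V) : ℕ → Set V → Prop
  | 0, _ => False
  | d + 1, S =>
      (∃ v, S = {v}) ∨
      ∃ P : Set (Set V),
        (∀ A ∈ P, A.Nonempty ∧ A ⊆ S ∧ CotreeDepth G d A) ∧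
        ⋃₀ P = S ∧
        (∀ A ∈ P, ∀ B ∈ P, A ≠ B → Disjoint A B) ∧
        ((∀ A ∈ P, ∀ B ∈ P, A ≠ B → ∀ x ∈ A, ∀ y ∈ B, G.Adj x y) ∨
          (∀ A ∈ P, ∀ B ∈ P, A ≠ B → ∀ x ∈ A, ∀ y ∈ B, ¬ G.Adj x y))

/-- `G` contains `K_{t,t}` as an induced subgraph. -/
def HasInducedBiclique {V : Type*} (G : SimpleGraph V) (t : ℕ) : Prop :=
  ∃ A B : Finset V, Disjoint A B ∧ A.card = t ∧ B.card = t ∧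
    (∀ a ∈ A, ∀ b ∈ B, G.Adj a b) ∧
    (∀ a ∈ A, ∀ a' ∈ A, ¬ G.Adj a a') ∧
    (∀ b ∈ B, ∀ b' ∈ B, ¬ G.Adj b b')

/-- `G` induces a cluster graph (disjoint union of cliques) on the set `X`. -/
def IsClusterSet {V : Type*} (G : SimpleGraph V) (X : Set V) : Prop :=
  ∀ x ∈ X, ∀ y ∈ X, ∀ z ∈ X, G.Adj x y → G.Adj y z → x = z ∨ G.Adj x z

section Aux
variable {V : Type*} (G : SimpleGraph V)

/-- No independent set of size `n` inside `A`. -/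
def NoIndep (A : Set V) (n : ℕ) : Prop :=
  ¬ ∃ s : Finset V, ↑s ⊆ A ∧ s.card = n ∧ ∀ x ∈ s, ∀ y ∈ s, ¬ G.Adj x y

variable {G}

lemma noIndep_mono {A B : Set V} {n : ℕ} (hBA : B ⊆ A) (h : NoIndep G A n) :
    NoIndep G B n := fun ⟨s, hs, hc, hi⟩ => h ⟨s, hs.trans hBA, hc, hi⟩

lemma glue {F : Set V → (V → ℕ) → Prop} (P : Set (Set V))
    (hdisj : ∀ A ∈ P, ∀ B ∈ P, A ≠ B → Disjoint A B)
    (hF : ∀ p ∈ P, ∃ c : V → ℕ, F p c) :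
    ∃ (g : Set V → V → ℕ) (c : V → ℕ),
      (∀ p ∈ P, F p (g p)) ∧ ∀ p ∈ P, ∀ v ∈ p, c v = g p v := by
  classical
  have hF' : ∀ p : Set V, ∃ c : V → ℕ, p ∈ P → F p c := by
    intro p
    by_cases hp : p ∈ P
    · obtain ⟨c, hc⟩ := hF p hp; exact ⟨c, fun _ => hc⟩
    · exact ⟨fun _ => 0, fun h => absurd h hp⟩
  choose g hg using hF'
  refine ⟨g, fun v => if h : ∃ p ∈ P, v ∈ p then g h.choose v else 0,
    fun p hp => hg p hp, fun p hp v hv => ?_⟩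
  have h : ∃ p ∈ P, v ∈ p := ⟨p, hp, hv⟩
  simp only [dif_pos h]
  have hq : h.choose ∈ P ∧ v ∈ h.choose := ⟨h.choose_spec.1, h.choose_spec.2⟩
  have : h.choose = p := by
    by_contra hne
    exact (hdisj _ hq.1 p hp hne).ne_of_mem hq.2 hv rfl
  rw [this]

end Aux

section Aux2
variable {V : Type*} {G : SimpleGraph V}

/-- A cograph piece with no independent set of size `k+1` partitions into `k` cliques. -/
lemma cliquePart : ∀ d k (A : Set V), CotreeDepth G d A → NoIndep G A (k + 1) →
    ∃ c : V → ℕ, (∀ v ∈ A, c v < k) ∧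
      ∀ x ∈ A, ∀ y ∈ A, c x = c y → x = y ∨ G.Adj x y := by
  intro d
  induction d with
  | zero => intro k A h; exact absurd h (by simp [CotreeDepth])
  | succ d IHd =>
    intro k
    induction k using Nat.strong_induction_on with
    | _ k IHk =>
    intro A hA hNI
    classical
    -- A is nonempty → k ≥ 1 will be available where needed
    have hk1 : ∀ v ∈ A, 1 ≤ k := by
      intro v hv
      by_contra hk
      push_neg at hk
      interval_cases k
      refine hNI ⟨{v}, by simpa using hv, by simp, ?_⟩
      intro x hx y hy
      simp only [Finset.mem_singleton] at hx hy
      rw [hx, hy]; exact G.loopless.irrefl v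
    rw [CotreeDepth] at hA
    rcases hA with ⟨v, rfl⟩ | ⟨P, hparts, hsUnion, hdisj, htype⟩
    · refine ⟨fun _ => 0, fun w hw => lt_of_lt_of_le Nat.zero_lt_one (hk1 w hw), ?_⟩
      intro x hx y hy _
      simp only [Set.mem_singleton_iff] at hx hy
      left; rw [hx, hy]
    rcases htype with hjoin | hunion
    · -- join node: glue clique partitions of parts
      have hF : ∀ p ∈ P, ∃ c : V → ℕ, (∀ v ∈ p, c v < k) ∧
          ∀ x ∈ p, ∀ y ∈ p, c x = c y → x = y ∨ G.Adj x y := by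
        intro p hp
        obtain ⟨hne, hpA, hpd⟩ := hparts p hp
        exact IHd k p hpd (noIndep_mono hpA hNI)
      obtain ⟨g, c, hg, hc⟩ := glue P hdisj hF
      refine ⟨c, ?_, ?_⟩
      · intro v hv
        rw [← hsUnion] at hv
        obtain ⟨p, hp, hvp⟩ := hv
        rw [hc p hp v hvp]
        exact (hg p hp).1 v hvp
      · intro x hx y hy hxy
        rw [← hsUnion] at hx hy
        obtain ⟨p, hp, hxp⟩ := hx
        obtain ⟨q, hq, hyq⟩ := hy
        by_cases hpq : p = q
        · subst hpq
          rw [hc p hp x hxp, hc p hp y hyq] at hxy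
          exact (hg p hp).2 x hxp y hyq hxy
        · exact Or.inr (hjoin p hp q hq hpq x hxp y hyq)
    · -- union node: split off one part
      by_cases hPe : P = ∅
      · subst hPe
        simp only [Set.sUnion_empty] at hsUnion
        exact ⟨fun _ => 0, fun v hv => by rw [← hsUnion] at hv; exact absurd hv (by simp),
          fun x hx => by rw [← hsUnion] at hx; exact absurd hx (by simp)⟩
      obtain ⟨p0, hp0⟩ := Set.nonempty_iff_ne_empty.2 hPe
      obtain ⟨hp0ne, hp0A, hp0d⟩ := hparts p0 hp0
      obtain ⟨v0, hv0⟩ := hp0ne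
      have hk : 1 ≤ k := hk1 v0 (hp0A hv0)
      set Q : ℕ → Prop := fun n => ∃ s : Finset V, ↑s ⊆ p0 ∧ s.card = n ∧
        ∀ x ∈ s, ∀ y ∈ s, ¬ G.Adj x y with hQ
      have hQ1 : Q 1 := ⟨{v0}, by simpa using hv0, by simp, by
        intro x hx y hy
        simp only [Finset.mem_singleton] at hx hy
        rw [hx, hy]; exact G.loopless.irrefl v0⟩
      set j := Nat.findGreatest Q k with hj
      have hj1 : 1 ≤ j := Nat.le_findGreatest hk hQ1
      have hjk : j ≤ k := Nat.findGreatest_le k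
      have hQj : Q j := Nat.findGreatest_spec hk hQ1
      have hNIp0 : NoIndep G p0 (j + 1) := by
        rcases eq_or_lt_of_le hjk with h | h
        · rw [h]; exact noIndep_mono hp0A hNI
        · exact Nat.findGreatest_is_greatest (Nat.lt_succ_self j)
            (Nat.succ_le_of_lt h)
      obtain ⟨c0, hc0b, hc0q⟩ := IHd j p0 hp0d hNIp0
      -- the rest
      by_cases hrest : P \ {p0} = ∅
      · -- A = p0
        have hAp0 : A = p0 := by
          rw [← hsUnion]
          apply subset_antisymm
          · intro v hv
            obtain ⟨p, hp, hvp⟩ := hv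
            have : p = p0 := by
              by_contra hne
              exact absurd (Set.mem_diff_singleton.2 ⟨hp, hne⟩) (by rw [hrest]; simp)
            rwa [this] at hvp
          · exact fun v hv => ⟨p0, hp0, hv⟩
        subst hAp0
        exact ⟨c0, fun v hv => lt_of_lt_of_le (hc0b v hv) hjk, hc0q⟩
      · have hrestCT : CotreeDepth G (d + 1) (⋃₀ (P \ {p0})) := by
          rw [CotreeDepth]
          refine Or.inr ⟨P \ {p0}, ?_, rfl, ?_, Or.inr ?_⟩
          · intro B hB
            obtain ⟨hBne, _, hBd⟩ := hparts B hB.1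
            exact ⟨hBne, Set.subset_sUnion_of_mem hB, hBd⟩
          · exact fun B hB C hC hne => hdisj B hB.1 C hC.1 hne
          · exact fun B hB C hC hne => hunion B hB.1 C hC.1 hne
        set R := ⋃₀ (P \ {p0}) with hR
        have hRA : R ⊆ A := by
          rw [← hsUnion]; exact Set.sUnion_subset_sUnion (Set.diff_subset)
        have hRp0 : ∀ v ∈ R, v ∉ p0 := by
          intro v hv hvp0
          obtain ⟨q, hq, hvq⟩ := hv
          exact (hdisj q hq.1 p0 hp0 hq.2).ne_of_mem hvq hvp0 rfl
        have hNIR : NoIndep G R (k - j + 1) := by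
          rintro ⟨s, hsR, hsc, hsi⟩
          obtain ⟨s0, hs0p, hs0c, hs0i⟩ := hQj
          have hdisjs : Disjoint s s0 := by
            rw [Finset.disjoint_left]
            intro a ha ha0
            exact hRp0 a (hsR ha) (hs0p ha0)
          refine hNI ⟨s ∪ s0, ?_, ?_, ?_⟩
          · intro a ha
            rcases Finset.mem_union.1 ha with h | h
            · exact hRA (hsR h)
            · exact hp0A (hs0p h)
          · rw [Finset.card_union_of_disjoint hdisjs, hsc, hs0c]
            omega
          · intro x hx y hy
            rcases Finset.mem_union.1 hx with hx | hx <;>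
              rcases Finset.mem_union.1 hy with hy | hy
            · exact hsi x hx y hy
            · -- x ∈ R, y ∈ p0
              obtain ⟨q, hq, hxq⟩ := hsR hx
              exact fun had => hunion q hq.1 p0 hp0 hq.2 x hxq y (hs0p hy) had
            · obtain ⟨q, hq, hyq⟩ := hsR hy
              exact fun had => hunion p0 hp0 q hq.1 (Ne.symm hq.2) x (hs0p hx) y hyq had
            · exact hs0i x hx y hy
        obtain ⟨c1, hc1b, hc1q⟩ := IHk (k - j) (by omega) R hrestCT hNIR
        refine ⟨fun v => if v ∈ p0 then c0 v else c1 v + j, ?_, ?_⟩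
        · intro v hv
          by_cases hvp : v ∈ p0
          · simp only [if_pos hvp]; exact lt_of_lt_of_le (hc0b v hvp) hjk
          · simp only [if_neg hvp]
            have hvR : v ∈ R := by
              rw [← hsUnion] at hv
              obtain ⟨q, hq, hvq⟩ := hv
              have : q ≠ p0 := fun h => hvp (h ▸ hvq)
              exact ⟨q, ⟨hq, this⟩, hvq⟩
            have := hc1b v hvR
            omega
        · intro x hx y hy hxy
          have memR : ∀ w ∈ A, w ∉ p0 → w ∈ R := by
            intro w hw hwp
            rw [← hsUnion] at hw
            obtain ⟨q, hq, hwq⟩ := hw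
            exact ⟨q, ⟨hq, fun h => hwp (h ▸ hwq)⟩, hwq⟩
          by_cases hxp : x ∈ p0 <;> by_cases hyp : y ∈ p0
          · simp only [if_pos hxp, if_pos hyp] at hxy
            exact hc0q x hxp y hyp hxy
          · simp only [if_pos hxp, if_neg hyp] at hxy
            have := hc0b x hxp
            omega
          · simp only [if_neg hxp, if_pos hyp] at hxy
            have := hc0b y hyp
            omega
          · simp only [if_neg hxp, if_neg hyp] at hxy
            exact hc1q x (memR x hx hxp) y (memR y hy hyp) (by omega)

end Aux2

section Main
variable {V : Type*} {G : SimpleGraph V}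

lemma mainLemma (t : ℕ) (ht : 2 ≤ t) (hKtt : ¬ HasInducedBiclique G t) :
    ∀ d (A : Set V), CotreeDepth G (d + 1) A →
      ∃ c : V → ℕ, (∀ v ∈ A, c v < d * (t - 1) + 1) ∧
        ∀ x ∈ A, ∀ y ∈ A, ∀ z ∈ A, c x = c y → c y = c z →
          G.Adj x y → G.Adj y z → x = z ∨ G.Adj x z := by
  intro d
  induction d with
  | zero =>
    intro A hA
    rw [CotreeDepth] at hA
    refine ⟨fun _ => 0, fun v _ => Nat.succ_pos _, ?_⟩
    rcases hA with ⟨v, rfl⟩ | ⟨P, hparts, hsUnion, hdisj, htype⟩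
    · intro x hx y hy z hz _ _ _ _
      simp only [Set.mem_singleton_iff] at hx hz
      left; rw [hx, hz]
    · have hPe : P = ∅ := by
        by_contra hne
        obtain ⟨p, hp⟩ := Set.nonempty_iff_ne_empty.2 hne
        exact (hparts p hp).2.2
      subst hPe
      simp only [Set.sUnion_empty] at hsUnion
      intro x hx
      rw [← hsUnion] at hx
      exact absurd hx (by simp)
  | succ d IH =>
    intro A hA
    classical
    rw [CotreeDepth] at hA
    rcases hA with ⟨v, rfl⟩ | ⟨P, hparts, hsUnion, hdisj, htype⟩
    · refine ⟨fun _ => 0, fun v _ => Nat.succ_pos _, ?_⟩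
      intro x hx y hy z hz _ _ _ _
      simp only [Set.mem_singleton_iff] at hx hz
      left; rw [hx, hz]
    have hm : (d + 1) * (t - 1) = d * (t - 1) + (t - 1) := Nat.succ_mul d (t - 1)
    rcases htype with hjoin | hunion
    · -- join node
      set HasT : Set V → Prop := fun p => ∃ s : Finset V, ↑s ⊆ p ∧ s.card = t ∧
        ∀ x ∈ s, ∀ y ∈ s, ¬ G.Adj x y with hHasT
      have hUniq : ∀ p ∈ P, ∀ q ∈ P, HasT p → HasT q → p = q := by
        intro p hp q hq ⟨sp, hspp, hspc, hspi⟩ ⟨sq, hsqq, hsqc, hsqi⟩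
        by_contra hne
        refine hKtt ⟨sp, sq, ?_, hspc, hsqc, ?_, ?_, ?_⟩
        · rw [Finset.disjoint_left]
          intro a ha ha'
          exact (hdisj p hp q hq hne).ne_of_mem (hspp ha) (hsqq ha') rfl
        · exact fun a ha b hb => hjoin p hp q hq hne a (hspp ha) b (hsqq hb)
        · exact hspi
        · exact hsqi
      have hF : ∀ p ∈ P, ∃ c : V → ℕ,
          (HasT p → (∀ v ∈ p, c v < d * (t - 1) + 1) ∧
            ∀ x ∈ p, ∀ y ∈ p, ∀ z ∈ p, c x = c y → c y = c z →
              G.Adj x y → G.Adj y z → x = z ∨ G.Adj x z) ∧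
          (¬ HasT p → (∀ v ∈ p, d * (t - 1) + 1 ≤ c v ∧ c v < (d + 1) * (t - 1) + 1) ∧
            ∀ x ∈ p, ∀ y ∈ p, c x = c y → x = y ∨ G.Adj x y) := by
        intro p hp
        obtain ⟨hne, hpA, hpd⟩ := hparts p hp
        by_cases hT : HasT p
        · obtain ⟨c, hcb, hcc⟩ := IH p hpd
          exact ⟨c, fun _ => ⟨hcb, hcc⟩, fun h => absurd hT h⟩
        · have hNI : NoIndep G p ((t - 1) + 1) := by
            have : (t - 1) + 1 = t := by omega
            rw [this]; exact hT
          obtain ⟨c', hcb, hcc⟩ := cliquePart (d + 1) (t - 1) p hpd hNI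
          refine ⟨fun v => c' v + (d * (t - 1) + 1), fun h => absurd h hT, fun _ => ⟨?_, ?_⟩⟩
          · intro v hv
            show d * (t - 1) + 1 ≤ c' v + (d * (t - 1) + 1) ∧
              c' v + (d * (t - 1) + 1) < (d + 1) * (t - 1) + 1
            have := hcb v hv
            omega
          · intro x hx y hy hxy
            replace hxy : c' x + (d * (t - 1) + 1) = c' y + (d * (t - 1) + 1) := hxy
            exact hcc x hx y hy (by omega)
      obtain ⟨g, c, hg, hc⟩ := glue P hdisj hF
      have memPart : ∀ v ∈ A, ∃ p ∈ P, v ∈ p := by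
        intro v hv; rw [← hsUnion] at hv; exact hv
      refine ⟨c, ?_, ?_⟩
      · intro v hv
        obtain ⟨p, hp, hvp⟩ := memPart v hv
        rw [hc p hp v hvp]
        by_cases hT : HasT p
        · have := ((hg p hp).1 hT).1 v hvp
          omega
        · exact (((hg p hp).2 hT).1 v hvp).2
      · intro x hx y hy z hz hxy hyz haxy hayz
        obtain ⟨px, hpx, hxp⟩ := memPart x hx
        obtain ⟨py, hpy, hyp⟩ := memPart y hy
        obtain ⟨pz, hpz, hzp⟩ := memPart z hz
        have hcx := hc px hpx x hxp
        have hcy := hc py hpy y hyp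
        have hcz := hc pz hpz z hzp
        by_cases hn : c x < d * (t - 1) + 1
        · -- all parts have HasT, hence equal
          have hTx : HasT px := by
            by_contra hT
            have := (((hg px hpx).2 hT).1 x hxp).1
            omega
          have hTy : HasT py := by
            by_contra hT
            have := (((hg py hpy).2 hT).1 y hyp).1
            omega
          have hTz : HasT pz := by
            by_contra hT
            have := (((hg pz hpz).2 hT).1 z hzp).1
            omega
          have e1 : py = px := hUniq py hpy px hpx hTy hTx
          have e2 : pz = px := hUniq pz hpz px hpx hTz hTx
          have hyp' : y ∈ px := e1 ▸ hyp
          have hzp' : z ∈ px := e2 ▸ hzp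
          have hcy' : c y = g px y := by rw [← e1]; exact hcy
          have hcz' : c z = g px z := by rw [← e2]; exact hcz
          exact ((hg px hpx).1 hTx).2 x hxp y hyp' z hzp'
            (by rw [← hcx, ← hcy']; exact hxy) (by rw [← hcy', ← hcz']; exact hyz) haxy hayz
        · have hTx : ¬ HasT px := by
            intro hT
            have := ((hg px hpx).1 hT).1 x hxp
            omega
          have hTz : ¬ HasT pz := by
            intro hT
            have := ((hg pz hpz).1 hT).1 z hzp
            omega
          by_cases hxz : px = pz
          · subst hxz
            exact ((hg px hpx).2 hTx).2 x hxp z hzp (by rw [← hcx, ← hcz]; omega)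
          · exact Or.inr (hjoin px hpx pz hpz hxz x hxp z hzp)
    · -- union node
      have hF : ∀ p ∈ P, ∃ c : V → ℕ, (∀ v ∈ p, c v < d * (t - 1) + 1) ∧
          ∀ x ∈ p, ∀ y ∈ p, ∀ z ∈ p, c x = c y → c y = c z →
            G.Adj x y → G.Adj y z → x = z ∨ G.Adj x z := by
        intro p hp
        exact IH p (hparts p hp).2.2
      obtain ⟨g, c, hg, hc⟩ := glue P hdisj hF
      have memPart : ∀ v ∈ A, ∃ p ∈ P, v ∈ p := by
        intro v hv; rw [← hsUnion] at hv; exact hv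
      refine ⟨c, ?_, ?_⟩
      · intro v hv
        obtain ⟨p, hp, hvp⟩ := memPart v hv
        rw [hc p hp v hvp]
        have := (hg p hp).1 v hvp
        omega
      · intro x hx y hy z hz hxy hyz haxy hayz
        obtain ⟨px, hpx, hxp⟩ := memPart x hx
        obtain ⟨py, hpy, hyp⟩ := memPart y hy
        obtain ⟨pz, hpz, hzp⟩ := memPart z hz
        have e1 : px = py := by
          by_contra hne
          exact hunion px hpx py hpy hne x hxp y hyp haxy
        have e2 : py = pz := by
          by_contra hne
          exact hunion py hpy pz hpz hne y hyp z hzp hayz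
        have hyp' : y ∈ px := by rw [e1]; exact hyp
        have hzp' : z ∈ px := by rw [e1, e2]; exact hzp
        exact (hg px hpx).2 x hxp y hyp' z hzp'
          (by rw [← hc px hpx x hxp, ← hc px hpx y hyp']; exact hxy)
          (by rw [← hc px hpx y hyp', ← hc px hpx z hzp']; exact hyz) haxy hayz

end Main

/-- A cograph of depth at most `d` with no induced `K_{t,t}` (for positive `t`) has
subchromatic number at most `1 + (d - 1)(t - 1)`: there is a coloring with that many
colors in which every color class induces a disjoint union of cliques. -/
theorem cograph_depth_subchromatic {V : Type*} (G : SimpleGraph V) (d t : ℕ)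
    (hd : 1 ≤ d) (ht : 1 ≤ t) (hG : CotreeDepth G d Set.univ)
    (hKtt : ¬ HasInducedBiclique G t) :
    ∃ c : V → Fin (1 + (d - 1) * (t - 1)),
      ∀ i, IsClusterSet G {v | c v = i} := by
  classical
  by_cases ht1 : t = 1
  · subst ht1
    refine ⟨fun _ => ⟨0, by norm_num⟩, ?_⟩
    intro i x hx y hy z hz haxy hayz
    exfalso
    refine hKtt ⟨{x}, {y}, by simp [haxy.ne], by simp, by simp, ?_, ?_, ?_⟩
    · intro a ha b hb
      simp only [Finset.mem_singleton] at ha hb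
      rw [ha, hb]; exact haxy
    · intro a ha a' ha'
      simp only [Finset.mem_singleton] at ha ha'
      rw [ha, ha']; exact G.loopless.irrefl x
    · intro b hb b' hb'
      simp only [Finset.mem_singleton] at hb hb'
      rw [hb, hb']; exact G.loopless.irrefl y
  · have ht2 : 2 ≤ t := by omega
    obtain ⟨d', rfl⟩ : ∃ d', d = d' + 1 := ⟨d - 1, by omega⟩
    obtain ⟨c, hcb, hcc⟩ := mainLemma t ht2 hKtt d' Set.univ hG
    have hlt : ∀ v, c v < 1 + (d' + 1 - 1) * (t - 1) := by
      intro v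
      have := hcb v (Set.mem_univ v)
      simp only [Nat.add_sub_cancel]
      omega
    refine ⟨fun v => ⟨c v, hlt v⟩, ?_⟩
    intro i x hx y hy z hz haxy hayz
    simp only [Set.mem_setOf_eq] at hx hy hz
    have hcx : c x = (i : ℕ) := congrArg Fin.val hx
    have hcy : c y = (i : ℕ) := congrArg Fin.val hy
    have hcz : c z = (i : ℕ) := congrArg Fin.val hz
    exact hcc x (Set.mem_univ x) y trivial z trivial (by omega) (by omega) haxy hayz
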